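/- Let R be a domain, X a partially ordered set of variables, and P a maximal small ideal of R[X]. Then Y = P ∩ X is a maximal compatible subset of X: if Y ⊆ Y' ⊆ X and Y' is upward compatible, then Y' = Y. -/

import Mathlib

/-- `Y` is upward compatible in the poset `X`: every finite subset of `Y`
has an upper bound in `X`. -/
def UpCompatible {X : Type*} [PartialOrder X] (Y : Set X) : Prop :=
  ∀ F : Finset X, ↑F ⊆ Y → ∃ x : X, ∀ y ∈ F, y ≤ x

/-- A polynomial `f ∈ R[X]` is dominated by the variable `x`: every monomial
appearing in `f` contains some variable `y ≤ x`. -/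
def Dominated {R : Type*} [CommRing R] {X : Type*} [PartialOrder X]
    (f : MvPolynomial X R) (x : X) : Prop :=
  ∀ m ∈ f.support, ∃ y : X, m y ≠ 0 ∧ y ≤ x

/-- A polynomial is small if it is dominated by some variable. -/
def SmallPoly {R : Type*} [CommRing R] {X : Type*} [PartialOrder X]
    (f : MvPolynomial X R) : Prop :=
  ∃ x : X, Dominated f x

/-- An ideal is small if all of its elements are small. -/
def SmallIdeal {R : Type*} [CommRing R] {X : Type*} [PartialOrder X]
    (I : Ideal (MvPolynomial X R)) : Prop :=
  ∀ f ∈ I, SmallPoly f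

/-- A maximal small ideal: a small ideal not properly contained in any small ideal. -/
def MaxSmallIdeal {R : Type*} [CommRing R] {X : Type*} [PartialOrder X]
    (P : Ideal (MvPolynomial X R)) : Prop :=
  SmallIdeal P ∧ ∀ I : Ideal (MvPolynomial X R), SmallIdeal I → P ≤ I → I = P

section Aux

set_option linter.unusedSectionVars false

open MvPolynomial

variable {R : Type*} [CommRing R] {X : Type*} [PartialOrder X]

/-- degree of a monomial -/
private def mdeg (m : X →₀ ℕ) : ℕ := m.sum fun _ e => e

private lemma mdeg_add (a b : X →₀ ℕ) : mdeg (a + b) = mdeg a + mdeg b :=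
  Finsupp.sum_add_index' (fun _ => rfl) (fun _ _ _ => rfl)

private lemma apply_le_mdeg (m : X →₀ ℕ) (y : X) : m y ≤ mdeg m := by
  by_cases h : m y = 0
  · simp [h]
  · exact Finset.single_le_sum (f := fun y => m y) (fun _ _ => Nat.zero_le _)
      (Finsupp.mem_support_iff.2 h)

private lemma mdeg_le_totalDegree {p : MvPolynomial X R} {m : X →₀ ℕ}
    (h : m ∈ p.support) : mdeg m ≤ p.totalDegree :=
  MvPolynomial.le_totalDegree h

private lemma mem_support_mul_monomial {q : MvPolynomial X R} {s m : X →₀ ℕ} :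
    m ∈ (q * monomial s 1).support ↔ s ≤ m ∧ m - s ∈ q.support := by
  rw [mem_support_iff, coeff_mul_monomial', mem_support_iff]
  split_ifs with h
  · simp [h]
  · simp [h]

/-- The block-sum construction: given a list of (polynomial in P, monomial) pairs
with nonzero monomials, there is an element `h` of `P` whose support contains,
for each pair `(q, m')`, a shifted copy `s + supp q` where the variables of `s`
are among those of `m'`. -/
private lemma rec_blocks (P : Ideal (MvPolynomial X R)) :
    ∀ L : List (MvPolynomial X R × (X →₀ ℕ)),
      (∀ pr ∈ L, pr.1 ∈ P ∧ pr.2 ≠ 0) →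
      ∃ h ∈ P, ∀ pr ∈ L, ∃ s : X →₀ ℕ,
        (∀ y, s y ≠ 0 → pr.2 y ≠ 0) ∧ ∀ m ∈ pr.1.support, s + m ∈ h.support := by
  intro L
  induction L with
  | nil => exact fun _ => ⟨0, P.zero_mem, by simp⟩
  | cons pr L ih =>
    intro hL
    obtain ⟨h, hhP, hbl⟩ := ih (fun p hp => hL p (List.mem_cons_of_mem _ hp))
    obtain ⟨hq, hm'⟩ := hL pr List.mem_cons_self
    set q := pr.1 with hqdef
    set m' := pr.2 with hm'def
    set N : ℕ := h.totalDegree + 1 with hN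
    set s : X →₀ ℕ := N • m' with hs
    set B := q * monomial s 1 with hB
    have hsapp : ∀ y, s y = N * m' y := fun y => by
      rw [hs]; simp
    have hNs : N ≤ mdeg s := by
      obtain ⟨y, hy⟩ : ∃ y, m' y ≠ 0 := by
        by_contra hc
        push_neg at hc
        exact hm' (Finsupp.ext fun y => hc y)
      calc N ≤ N * m' y := Nat.le_mul_of_pos_right _ (Nat.pos_of_ne_zero hy)
        _ = s y := (hsapp y).symm
        _ ≤ mdeg s := apply_le_mdeg _ _
    have hBdeg : ∀ m ∈ B.support, h.totalDegree < mdeg m := by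
      intro m hm
      obtain ⟨hle, -⟩ := mem_support_mul_monomial.1 hm
      have hms : m = s + (m - s) := (add_tsub_cancel_of_le hle).symm
      have : mdeg s ≤ mdeg m := by
        rw [hms, mdeg_add]; exact Nat.le_add_right _ _
      omega
    have hdisj : ∀ m ∈ B.support, m ∉ h.support := by
      intro m hm hmem
      exact absurd (mdeg_le_totalDegree hmem) (not_le.2 (hBdeg m hm))
    have hsup1 : ∀ m ∈ h.support, m ∈ (h + B).support := by
      intro m hm
      rw [mem_support_iff, coeff_add]
      have hB0 : B.coeff m = 0 := by
        rw [← notMem_support_iff]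
        exact fun hc => hdisj m hc hm
      rw [hB0, add_zero]
      exact mem_support_iff.1 hm
    have hsup2 : ∀ m ∈ B.support, m ∈ (h + B).support := by
      intro m hm
      rw [mem_support_iff, coeff_add]
      have hh0 : h.coeff m = 0 := by
        rw [← notMem_support_iff]
        exact hdisj m hm
      rw [hh0, zero_add]
      exact mem_support_iff.1 hm
    refine ⟨h + B, P.add_mem hhP (Ideal.mul_mem_right _ _ hq), ?_⟩
    intro pr' hpr'
    rcases List.mem_cons.1 hpr' with rfl | hpr'
    · refine ⟨s, ?_, ?_⟩
      · intro y hy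
        rw [hsapp y] at hy
        exact fun h0 => hy (by rw [← hm'def] at h0; rw [h0, Nat.mul_zero])
      · intro m hm
        refine hsup2 _ (mem_support_mul_monomial.2 ⟨self_le_add_right s m, ?_⟩)
        rw [add_tsub_cancel_left]
        exact hm
    · obtain ⟨t, ht1, ht2⟩ := hbl pr' hpr'
      exact ⟨t, ht1, fun m hm => hsup1 _ (ht2 m hm)⟩

/-- Any finite list of elements of a small ideal has a common dominating variable. -/
private lemma doms {P : Ideal (MvPolynomial X R)} (hP : SmallIdeal P)
    (qs : List (MvPolynomial X R)) (hqs : ∀ q ∈ qs, q ∈ P) :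
    ∃ x : X, ∀ q ∈ qs, Dominated q x := by
  classical
  set L := qs.flatMap (fun q => q.support.toList.map fun m' => (q, m')) with hLdef
  have hL : ∀ pr ∈ L, pr.1 ∈ P ∧ pr.2 ≠ 0 := by
    intro pr hpr
    rw [hLdef, List.mem_flatMap] at hpr
    obtain ⟨q, hq, hpr⟩ := hpr
    rw [List.mem_map] at hpr
    obtain ⟨m', hm', rfl⟩ := hpr
    rw [Finset.mem_toList] at hm'
    refine ⟨hqs q hq, ?_⟩
    obtain ⟨x₀, hx₀⟩ := hP q (hqs q hq)
    obtain ⟨y, hy, -⟩ := hx₀ m' hm'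
    intro h0
    have hm0 : m' = 0 := h0
    simp [hm0] at hy
  obtain ⟨h, hh, hbl⟩ := rec_blocks P L hL
  obtain ⟨x, hx⟩ := hP h hh
  refine ⟨x, fun q hq => ?_⟩
  by_contra hnd
  rw [Dominated] at hnd
  push_neg at hnd
  obtain ⟨mb, hmb, hbar⟩ := hnd
  have hmem : (q, mb) ∈ L := by
    rw [hLdef, List.mem_flatMap]
    exact ⟨q, hq, List.mem_map.2 ⟨mb, Finset.mem_toList.2 hmb, rfl⟩⟩
  obtain ⟨s, hs1, hs2⟩ := hbl _ hmem
  have key : ∀ m ∈ q.support, ∃ y, m y ≠ 0 ∧ y ≤ x := by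
    intro m hm
    obtain ⟨y, hy, hyx⟩ := hx _ (hs2 m hm)
    have hy' : s y + m y ≠ 0 := by simpa using hy
    rcases Nat.eq_zero_or_pos (s y) with h0 | hpos
    · exact ⟨y, by omega, hyx⟩
    · exact absurd hyx (hbar y (hs1 y (by omega)))
  obtain ⟨y, hy, hyx⟩ := key mb hmb
  exact hbar y hy hyx

/-- If every element of `P` is dominated by some element above `v`,
then `X v ∈ P` (for a maximal small ideal `P`). -/
private lemma adjoin_small {P : Ideal (MvPolynomial X R)} (hP : MaxSmallIdeal P) {v : X}
    (hv : ∀ q ∈ P, ∃ x, v ≤ x ∧ Dominated q x) : MvPolynomial.X v ∈ P := by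
  classical
  have hsmall : SmallIdeal (P ⊔ Ideal.span {MvPolynomial.X v}) := by
    intro f hf
    rw [Submodule.mem_sup] at hf
    obtain ⟨q, hq, r, hr, rfl⟩ := hf
    obtain ⟨g, rfl⟩ := Ideal.mem_span_singleton'.1 hr
    obtain ⟨x, hvx, hdom⟩ := hv q hq
    refine ⟨x, fun m hm => ?_⟩
    rcases Finset.mem_union.1 (MvPolynomial.support_add hm) with hm | hm
    · exact hdom m hm
    · have hm' : m ∈ (g * monomial (Finsupp.single v 1) 1).support := hm
      obtain ⟨hle, -⟩ := mem_support_mul_monomial.1 hm'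
      refine ⟨v, ?_, hvx⟩
      have := hle v
      simp only [Finsupp.single_eq_same] at this
      omega
  have heq := hP.2 _ hsmall le_sup_left
  rw [← heq]
  exact Submodule.mem_sup_right (Ideal.subset_span rfl)

/-- Key structural lemma: every monomial of every element of a maximal small
ideal `P` contains a variable `v` with `X v ∈ P`. -/
private lemma var_mem {P : Ideal (MvPolynomial X R)} (hP : MaxSmallIdeal P)
    {p : MvPolynomial X R} (hp : p ∈ P) {m₀ : X →₀ ℕ} (hm₀ : m₀ ∈ p.support) :
    ∃ v, m₀ v ≠ 0 ∧ MvPolynomial.X v ∈ P := by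
  classical
  have claim : ∃ v, m₀ v ≠ 0 ∧ ∀ q ∈ P, ∃ x, v ≤ x ∧ Dominated q x := by
    by_contra hcon
    push_neg at hcon
    choose Q hQmem hQprop using hcon
    set qs := p :: (m₀.support.attach.toList.map fun v =>
      Q v.1 (Finsupp.mem_support_iff.1 v.2)) with hqsdef
    have hqs : ∀ q ∈ qs, q ∈ P := by
      intro q hq
      rcases List.mem_cons.1 hq with rfl | hq
      · exact hp
      · rw [List.mem_map] at hq
        obtain ⟨v, -, rfl⟩ := hq
        exact hQmem _ _
    obtain ⟨x, hx⟩ := doms hP.1 qs hqs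
    have hpx := hx p List.mem_cons_self
    obtain ⟨v, hv, hvx⟩ := hpx m₀ hm₀
    have hvS : v ∈ m₀.support := Finsupp.mem_support_iff.2 hv
    have hmemqs : Q v hv ∈ qs := by
      rw [hqsdef]
      refine List.mem_cons_of_mem _ (List.mem_map.2 ⟨⟨v, hvS⟩, ?_, rfl⟩)
      simp
    exact hQprop v hv x hvx (hx _ hmemqs)
  obtain ⟨v, hv, hvdom⟩ := claim
  exact ⟨v, hv, adjoin_small hP hvdom⟩

end Aux

/-- The set of variables contained in a maximal small ideal is a maximal
compatible subset of `X`. -/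
theorem maxSmallIdeal_vars_maxCompatible {R : Type*} [CommRing R] [IsDomain R]
    {X : Type*} [PartialOrder X] (P : Ideal (MvPolynomial X R))
    (hP : MaxSmallIdeal P) :
    ∀ Y' : Set X, {x : X | MvPolynomial.X x ∈ P} ⊆ Y' → UpCompatible Y' →
      Y' = {x : X | MvPolynomial.X x ∈ P} := by
  classical
  intro Y' hsub hcomp
  apply Set.Subset.antisymm _ hsub
  intro z hz
  show MvPolynomial.X z ∈ P
  have hsmall : SmallIdeal (P ⊔ Ideal.span {MvPolynomial.X z}) := by
    intro f hf
    rw [Submodule.mem_sup] at hf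
    obtain ⟨q, hq, r, hr, rfl⟩ := hf
    obtain ⟨g, rfl⟩ := Ideal.mem_span_singleton'.1 hr
    have hw : ∀ m ∈ q.support, ∃ v, m v ≠ 0 ∧ MvPolynomial.X v ∈ P :=
      fun m hm => var_mem hP hq hm
    choose w hw1 hw2 using hw
    set F : Finset X := insert z (q.support.attach.image fun m => w m.1 m.2) with hF
    have hFY : ↑F ⊆ Y' := by
      intro y hy
      rw [hF, Finset.coe_insert, Set.mem_insert_iff] at hy
      rcases hy with rfl | hy
      · exact hz
      · rw [Finset.coe_image, Set.mem_image] at hy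
        obtain ⟨m, -, rfl⟩ := hy
        exact hsub (hw2 m.1 m.2)
    obtain ⟨x, hx⟩ := hcomp F hFY
    refine ⟨x, fun m hm => ?_⟩
    rcases Finset.mem_union.1 (MvPolynomial.support_add hm) with hm | hm
    · refine ⟨w m hm, hw1 m hm, hx _ ?_⟩
      exact Finset.mem_insert_of_mem
        (Finset.mem_image.2 ⟨⟨m, hm⟩, Finset.mem_attach _ _, rfl⟩)
    · have hm' : m ∈ (g * MvPolynomial.monomial (Finsupp.single z 1) 1).support := hm
      obtain ⟨hle, -⟩ := mem_support_mul_monomial.1 hm'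
      refine ⟨z, ?_, hx z (Finset.mem_insert_self _ _)⟩
      have := hle z
      simp only [Finsupp.single_eq_same] at this
      omega
  have heq := hP.2 _ hsmall le_sup_left
  rw [← heq]
  exact Submodule.mem_sup_right (Ideal.subset_span rfl)
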